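/- Let α ∈ (0,1], let T be a finite nonempty multiset of points in ℝ^d, and let P be a symmetric d×d matrix. Define V* = sup over all symmetric d×d matrices A with ‖A‖_F ≤ 1 of Var_{x∼T}[xᵀ P A P x]. Then for every sub-multiset T' ⊆ T with |T'| ≥ (α/2)·|T|: ‖Cov_{x∼T'}[P x] − E_{x∼T}[P x xᵀ P]‖_F² ≤ (4/α)·V* + (8/α²)·‖E_{x∼T}[P x xᵀ P]‖_op². -/

import Mathlib

open Matrix MeasureTheory ProbabilityTheory

noncomputable section

namespace ListDecCov

/-- Frobenius norm of a square real matrix. -/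
def frobNorm {d : ℕ} (M : Matrix (Fin d) (Fin d) ℝ) : ℝ :=
  Real.sqrt (∑ i, ∑ j, (M i j) ^ 2)

/-- Operator (spectral) norm of a square real matrix. -/
def opNorm {d : ℕ} (M : Matrix (Fin d) (Fin d) ℝ) : ℝ :=
  ‖Matrix.toEuclideanCLM (𝕜 := ℝ) M‖

/-- Euclidean (ℓ²) norm of a vector. -/
def vecNorm {d : ℕ} (v : Fin d → ℝ) : ℝ :=
  Real.sqrt (∑ i, (v i) ^ 2)

/-- The four Penrose equations characterizing the Moore–Penrose pseudoinverse. -/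
def IsMoorePenrose {d : ℕ} (H Hd : Matrix (Fin d) (Fin d) ℝ) : Prop :=
  H * Hd * H = H ∧ Hd * H * Hd = Hd ∧ (H * Hd)ᵀ = H * Hd ∧ (Hd * H)ᵀ = Hd * H

/-- Average of `f` over a finite set. -/
def fAvg {X V : Type*} [AddCommMonoid V] [Module ℝ V] (A : Finset X) (f : X → V) : V :=
  (A.card : ℝ)⁻¹ • ∑ x ∈ A, f x

/-- Average of `f` over a multiset. -/
def msAvg {X V : Type*} [AddCommMonoid V] [Module ℝ V] (T : Multiset X) (f : X → V) : V :=
  (T.card : ℝ)⁻¹ • (T.map f).sum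

/-- Empirical covariance matrix of `f x`, `x` ranging over a finite set. -/
def fCov {X : Type*} {d : ℕ} (A : Finset X) (f : X → (Fin d → ℝ)) :
    Matrix (Fin d) (Fin d) ℝ :=
  fAvg A (fun x => Matrix.vecMulVec (f x) (f x)) - Matrix.vecMulVec (fAvg A f) (fAvg A f)

/-- Empirical covariance matrix of `f x`, `x` ranging over a multiset. -/
def msCov {X : Type*} {d : ℕ} (T : Multiset X) (f : X → (Fin d → ℝ)) :
    Matrix (Fin d) (Fin d) ℝ :=
  msAvg T (fun x => Matrix.vecMulVec (f x) (f x)) - Matrix.vecMulVec (msAvg T f) (msAvg T f)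

/-- Empirical variance of `g x`, `x` ranging over a finite set. -/
def fVar {X : Type*} (A : Finset X) (g : X → ℝ) : ℝ :=
  fAvg A fun x => (g x - fAvg A g) ^ 2

/-- Empirical variance of `g x`, `x` ranging over a multiset. -/
def msVar {X : Type*} (T : Multiset X) (g : X → ℝ) : ℝ :=
  msAvg T fun x => (g x - msAvg T g) ^ 2

/-- The `k`-th smallest element (1-indexed) of a multiset of reals. -/
def kthSmallest (s : Multiset ℝ) (k : ℕ) : ℝ :=
  (s.sort (· ≤ ·)).getD (k - 1) 0

/-- Median (the `⌈m/2⌉`-th smallest element) of a multiset of reals of size `m`. -/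
def msMedian (s : Multiset ℝ) : ℝ :=
  kthSmallest s ((Multiset.card s + 1) / 2)

/-- Conditions (L.1)–(L.2) of stability, with respect to mean `μ`, covariance `Sig`
(with psd square root `sqrtSig`) and parameter `ε`. -/
def SatisfiesL12 {d : ℕ} (μ : Fin d → ℝ) (Sig sqrtSig : Matrix (Fin d) (Fin d) ℝ) (ε : ℝ)
    (A : Finset (Fin d → ℝ)) : Prop :=
  ∀ A' ⊆ A, (1 - ε) * (A.card : ℝ) ≤ (A'.card : ℝ) →
    (∀ v : Fin d → ℝ,
        |fAvg A' (fun x => v ⬝ᵥ (x - μ))| ≤ 0.1 * Real.sqrt (v ⬝ᵥ Sig.mulVec v)) ∧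
    (∀ U : Matrix (Fin d) (Fin d) ℝ, U.IsSymm →
        |Matrix.trace ((fAvg A' (fun x => Matrix.vecMulVec (x - μ) (x - μ)) - Sig) * U)|
          ≤ 0.1 * frobNorm (sqrtSig * U * sqrtSig))

end ListDecCov

namespace ListDecCov


section Aux

variable {X : Type*} {d : ℕ}

/-- Entrywise inner product of matrices. -/
def ip {d : ℕ} (M N : Matrix (Fin d) (Fin d) ℝ) : ℝ := ∑ i, ∑ j, M i j * N i j

lemma msAvg_real_def (T : Multiset X) (f : X → ℝ) :
    msAvg T f = (Multiset.card T : ℝ)⁻¹ * (T.map f).sum := by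
  simp [msAvg, smul_eq_mul]

lemma msAvg_add (T : Multiset X) (f g : X → ℝ) :
    msAvg T (fun x => f x + g x) = msAvg T f + msAvg T g := by
  simp [msAvg_real_def, Multiset.sum_map_add, mul_add]

lemma msAvg_const_mul (T : Multiset X) (c : ℝ) (f : X → ℝ) :
    msAvg T (fun x => c * f x) = c * msAvg T f := by
  simp [msAvg_real_def, Multiset.sum_map_mul_left]
  ring

lemma msAvg_neg (T : Multiset X) (f : X → ℝ) :
    msAvg T (fun x => -f x) = -msAvg T f := by
  have := msAvg_const_mul T (-1) f
  simpa using this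

lemma msAvg_const (T : Multiset X) (hT : T ≠ 0) (c : ℝ) :
    msAvg T (fun _ => c) = c := by
  have h : (Multiset.card T : ℝ) ≠ 0 := by
    simpa using (Multiset.card_pos.mpr hT).ne'
  simp [msAvg_real_def, Multiset.map_const', Multiset.sum_replicate, nsmul_eq_mul]
  field_simp

lemma msAvg_nonneg (T : Multiset X) (f : X → ℝ) (h : ∀ x ∈ T, 0 ≤ f x) :
    0 ≤ msAvg T f := by
  rw [msAvg_real_def]
  apply mul_nonneg (by positivity)
  apply Multiset.sum_nonneg
  intro a ha
  obtain ⟨x, hx, rfl⟩ := Multiset.mem_map.mp ha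
  exact h x hx

lemma msAvg_mono (T : Multiset X) (f g : X → ℝ) (h : ∀ x ∈ T, f x ≤ g x) :
    msAvg T f ≤ msAvg T g := by
  rw [msAvg_real_def, msAvg_real_def]
  apply mul_le_mul_of_nonneg_left _ (by positivity)
  exact Multiset.sum_map_le_sum_map f g h

lemma msAvg_abs_le (T : Multiset X) (f : X → ℝ) :
    |msAvg T f| ≤ msAvg T (fun x => |f x|) := by
  rw [abs_le]
  constructor
  · rw [← msAvg_neg]
    exact msAvg_mono T _ _ fun x _ => neg_abs_le _
  · exact msAvg_mono T _ _ fun x _ => le_abs_self _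

lemma msAvg_finset_sum {ι : Type*} (T : Multiset X) (s : Finset ι) (F : ι → X → ℝ) :
    msAvg T (fun x => ∑ k ∈ s, F k x) = ∑ k ∈ s, msAvg T (F k) := by
  classical
  induction s using Finset.induction_on with
  | empty => simp [msAvg_real_def]
  | insert k s hk ih =>
    rw [Finset.sum_insert hk, ← ih, ← msAvg_add]
    simp_rw [Finset.sum_insert hk]

lemma sum_vec_apply (T : Multiset X) (f : X → (Fin d → ℝ)) (i : Fin d) :
    (T.map f).sum i = (T.map (fun x => f x i)).sum := by
  induction T using Multiset.induction_on with
  | empty => simp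
  | cons a s ih => simp [ih]

lemma sum_mat_apply (T : Multiset X) (f : X → Matrix (Fin d) (Fin d) ℝ) (i j : Fin d) :
    (T.map f).sum i j = (T.map (fun x => f x i j)).sum := by
  induction T using Multiset.induction_on with
  | empty => simp
  | cons a s ih => simp [Matrix.add_apply, ih]

lemma msAvg_vec_apply (T : Multiset X) (f : X → (Fin d → ℝ)) (i : Fin d) :
    msAvg T f i = msAvg T (fun x => f x i) := by
  simp [msAvg, sum_vec_apply, smul_eq_mul]

lemma msAvg_mat_apply (T : Multiset X) (f : X → Matrix (Fin d) (Fin d) ℝ) (i j : Fin d) :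
    msAvg T f i j = msAvg T (fun x => f x i j) := by
  simp only [msAvg, Matrix.smul_apply, sum_mat_apply, smul_eq_mul]

lemma frobNorm_nonneg (M : Matrix (Fin d) (Fin d) ℝ) : 0 ≤ frobNorm M := Real.sqrt_nonneg _

lemma frobNorm_sq (M : Matrix (Fin d) (Fin d) ℝ) :
    frobNorm M ^ 2 = ∑ i, ∑ j, (M i j) ^ 2 := by
  rw [frobNorm, Real.sq_sqrt]
  positivity

lemma ip_self (M : Matrix (Fin d) (Fin d) ℝ) : ip M M = frobNorm M ^ 2 := by
  rw [frobNorm_sq]; simp [ip, sq]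

lemma abs_ip_le (M N : Matrix (Fin d) (Fin d) ℝ) :
    |ip M N| ≤ frobNorm M * frobNorm N := by
  have key : (ip M N) ^ 2 ≤ (frobNorm M * frobNorm N) ^ 2 := by
    rw [mul_pow, frobNorm_sq, frobNorm_sq]
    have h := Finset.sum_mul_sq_le_sq_mul_sq (Finset.univ : Finset (Fin d × Fin d))
      (fun p => M p.1 p.2) (fun p => N p.1 p.2)
    simpa [ip, ← Finset.univ_product_univ, Finset.sum_product] using h
  calc |ip M N| = Real.sqrt ((ip M N) ^ 2) := (Real.sqrt_sq_eq_abs _).symm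
    _ ≤ Real.sqrt ((frobNorm M * frobNorm N) ^ 2) := Real.sqrt_le_sqrt key
    _ = frobNorm M * frobNorm N := by
        rw [Real.sqrt_sq_eq_abs,
          abs_of_nonneg (mul_nonneg (frobNorm_nonneg M) (frobNorm_nonneg N))]

lemma quad_le_opNorm (M : Matrix (Fin d) (Fin d) ℝ) (v : Fin d → ℝ) :
    v ⬝ᵥ M.mulVec v ≤ opNorm M * ∑ i, (v i) ^ 2 := by
  set w : EuclideanSpace ℝ (Fin d) := (WithLp.equiv 2 _).symm v with hw
  have hnw : ‖w‖ = Real.sqrt (∑ i, (v i) ^ 2) := by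
    rw [EuclideanSpace.norm_eq]
    congr 1
    apply Finset.sum_congr rfl
    intro i _
    rw [Real.norm_eq_abs, sq_abs]
    rfl
  have happ : (Matrix.toEuclideanCLM (𝕜 := ℝ) M) w = (WithLp.equiv 2 _).symm (M.mulVec v) := by
    rw [hw, WithLp.equiv_symm_apply, Matrix.toEuclideanCLM_toLp]
  have hnMv : Real.sqrt (∑ i, (M.mulVec v i) ^ 2) ≤ opNorm M * Real.sqrt (∑ i, (v i) ^ 2) := by
    have h1 := (Matrix.toEuclideanCLM (𝕜 := ℝ) M).le_opNorm w
    rw [happ] at h1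
    rw [← hnw]
    refine le_trans (le_of_eq ?_) h1
    rw [EuclideanSpace.norm_eq]
    congr 1
    apply Finset.sum_congr rfl
    intro i _
    rw [Real.norm_eq_abs, sq_abs]
    rfl
  have hcs : v ⬝ᵥ M.mulVec v ≤
      Real.sqrt (∑ i, (v i) ^ 2) * Real.sqrt (∑ i, (M.mulVec v i) ^ 2) := by
    have h2 := Finset.sum_mul_sq_le_sq_mul_sq (Finset.univ : Finset (Fin d))
      (fun i => v i) (fun i => M.mulVec v i)
    calc v ⬝ᵥ M.mulVec v ≤ |∑ i, v i * M.mulVec v i| := le_abs_self _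
      _ = Real.sqrt ((∑ i, v i * M.mulVec v i) ^ 2) := (Real.sqrt_sq_eq_abs _).symm
      _ ≤ Real.sqrt ((∑ i, (v i) ^ 2) * ∑ i, (M.mulVec v i) ^ 2) := Real.sqrt_le_sqrt h2
      _ = _ := Real.sqrt_mul (by positivity) _
  calc v ⬝ᵥ M.mulVec v
      ≤ Real.sqrt (∑ i, (v i) ^ 2) * Real.sqrt (∑ i, (M.mulVec v i) ^ 2) := hcs
    _ ≤ Real.sqrt (∑ i, (v i) ^ 2) * (opNorm M * Real.sqrt (∑ i, (v i) ^ 2)) :=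
        mul_le_mul_of_nonneg_left hnMv (Real.sqrt_nonneg _)
    _ = opNorm M * (Real.sqrt (∑ i, (v i) ^ 2) * Real.sqrt (∑ i, (v i) ^ 2)) := by ring
    _ = opNorm M * ∑ i, (v i) ^ 2 := by
        rw [Real.mul_self_sqrt (by positivity)]

lemma ip_sub_left (M N B : Matrix (Fin d) (Fin d) ℝ) :
    ip (M - N) B = ip M B - ip N B := by
  simp [ip, Matrix.sub_apply, sub_mul, Finset.sum_sub_distrib]

lemma ip_smul_left (c : ℝ) (M B : Matrix (Fin d) (Fin d) ℝ) :
    ip (c • M) B = c * ip M B := by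
  simp [ip, Matrix.smul_apply, smul_eq_mul, Finset.mul_sum, mul_assoc]

lemma ip_msAvg_left (T : Multiset X) (f : X → Matrix (Fin d) (Fin d) ℝ)
    (B : Matrix (Fin d) (Fin d) ℝ) :
    ip (msAvg T f) B = msAvg T (fun x => ip (f x) B) := by
  unfold ip
  rw [show (fun x => ∑ i, ∑ j, f x i j * B i j) =
      (fun x => ∑ p : Fin d × Fin d, f x p.1 p.2 * B p.1 p.2) by
    funext x
    rw [← Finset.univ_product_univ, Finset.sum_product]]
  rw [msAvg_finset_sum]
  rw [← Finset.univ_product_univ, Finset.sum_product]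
  apply Finset.sum_congr rfl
  intro i _
  apply Finset.sum_congr rfl
  intro j _
  rw [msAvg_mat_apply, mul_comm, ← msAvg_const_mul]
  congr 1
  funext x
  ring

lemma ip_msAvg_right (T : Multiset X) (B : Matrix (Fin d) (Fin d) ℝ)
    (f : X → Matrix (Fin d) (Fin d) ℝ) :
    ip B (msAvg T f) = msAvg T (fun x => ip B (f x)) := by
  unfold ip
  rw [show (fun x => ∑ i, ∑ j, B i j * f x i j) =
      (fun x => ∑ p : Fin d × Fin d, B p.1 p.2 * f x p.1 p.2) by
    funext x
    rw [← Finset.univ_product_univ, Finset.sum_product]]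
  rw [msAvg_finset_sum]
  rw [← Finset.univ_product_univ, Finset.sum_product]
  apply Finset.sum_congr rfl
  intro i _
  apply Finset.sum_congr rfl
  intro j _
  rw [msAvg_mat_apply, ← msAvg_const_mul]

lemma ip_vecMulVec (u : Fin d → ℝ) (B : Matrix (Fin d) (Fin d) ℝ) :
    ip (Matrix.vecMulVec u u) B = u ⬝ᵥ B.mulVec u := by
  simp only [ip, Matrix.vecMulVec_apply, dotProduct, Matrix.mulVec, Finset.mul_sum]
  apply Finset.sum_congr rfl
  intro i _
  apply Finset.sum_congr rfl
  intro j _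
  ring

lemma ip_vecMulVec_right (B : Matrix (Fin d) (Fin d) ℝ) (u : Fin d → ℝ) :
    ip B (Matrix.vecMulVec u u) = u ⬝ᵥ B.mulVec u := by
  simp only [ip, Matrix.vecMulVec_apply, dotProduct, Matrix.mulVec, Finset.mul_sum]
  apply Finset.sum_congr rfl
  intro i _
  apply Finset.sum_congr rfl
  intro j _
  ring

lemma ip_vecMulVec_vecMulVec (u w : Fin d → ℝ) :
    ip (Matrix.vecMulVec u u) (Matrix.vecMulVec w w) = (u ⬝ᵥ w) ^ 2 := by
  simp only [ip, Matrix.vecMulVec_apply, dotProduct, sq, Finset.sum_mul_sum]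
  apply Finset.sum_congr rfl
  intro i _
  apply Finset.sum_congr rfl
  intro j _
  ring

lemma frobNorm_vecMulVec (u : Fin d → ℝ) :
    frobNorm (Matrix.vecMulVec u u) = ∑ i, (u i) ^ 2 := by
  unfold frobNorm
  rw [show ∑ i, ∑ j, (Matrix.vecMulVec u u i j) ^ 2 = (∑ i, (u i) ^ 2) ^ 2 by
    simp only [Matrix.vecMulVec_apply, mul_pow, sq, Finset.sum_mul_sum]
    apply Finset.sum_congr rfl
    intro i _
    apply Finset.sum_congr rfl
    intro j _
    ring]
  exact Real.sqrt_sq (by positivity)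

lemma quad_form_eq (P A : Matrix (Fin d) (Fin d) ℝ) (hP : P.IsSymm) (x : Fin d → ℝ) :
    x ⬝ᵥ (P * A * P).mulVec x = (P.mulVec x) ⬝ᵥ A.mulVec (P.mulVec x) := by
  rw [← Matrix.mulVec_mulVec, ← Matrix.mulVec_mulVec, Matrix.dotProduct_mulVec]
  congr 1
  rw [← Matrix.mulVec_transpose, hP.eq]

lemma sum_map_le_of_le {T T' : Multiset X} (hsub : T' ≤ T) (f : X → ℝ)
    (hf : ∀ x ∈ T, 0 ≤ f x) : (T'.map f).sum ≤ (T.map f).sum := by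
  obtain ⟨U, rfl⟩ := Multiset.le_iff_exists_add.mp hsub
  rw [Multiset.map_add, Multiset.sum_add]
  have : 0 ≤ (U.map f).sum := by
    apply Multiset.sum_nonneg
    intro a ha
    obtain ⟨x, hx, rfl⟩ := Multiset.mem_map.mp ha
    exact hf x (by simp [hx])
  linarith

lemma jensen_sq (T : Multiset X) (hT : T ≠ 0) (f : X → ℝ) :
    (msAvg T f) ^ 2 ≤ msAvg T (fun x => (f x) ^ 2) := by
  set m := msAvg T f with hm
  have h0 : 0 ≤ msAvg T (fun x => (f x - m) ^ 2) :=
    msAvg_nonneg T _ fun x _ => sq_nonneg _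
  have hexp : msAvg T (fun x => (f x - m) ^ 2)
      = msAvg T (fun x => (f x) ^ 2) - m ^ 2 := by
    have : (fun x => (f x - m) ^ 2)
        = (fun x => (f x) ^ 2 + ((-2 * m) * f x + m ^ 2)) := by
      funext x; ring
    rw [this, msAvg_add, msAvg_add, msAvg_const_mul, msAvg_const T hT, ← hm]
    ring
  linarith [hexp ▸ h0]

lemma deviation_sq_le (T T' : Multiset X) (hsub : T' ≤ T) (hT' : T' ≠ 0) (g : X → ℝ) :
    (msAvg T' g - msAvg T g) ^ 2 ≤
      ((Multiset.card T : ℝ) / (Multiset.card T')) * msVar T g := by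
  have hcT' : (0 : ℝ) < (Multiset.card T' : ℝ) := by
    exact_mod_cast Multiset.card_pos.mpr hT'
  have hT : T ≠ 0 := by
    rintro rfl
    exact hT' (Multiset.le_zero.mp hsub)
  set m := msAvg T g with hm
  have h1 : msAvg T' g - m = msAvg T' (fun x => g x - m) := by
    have : (fun x => g x - m) = (fun x => g x + (-m)) := by funext x; ring
    rw [this, msAvg_add, msAvg_const T' hT']
    ring
  have h2 : (msAvg T' (fun x => g x - m)) ^ 2 ≤ msAvg T' (fun x => (g x - m) ^ 2) :=
    jensen_sq T' hT' _
  have h3 : msAvg T' (fun x => (g x - m) ^ 2) ≤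
      ((Multiset.card T : ℝ) / (Multiset.card T')) * msAvg T (fun x => (g x - m) ^ 2) := by
    rw [msAvg_real_def, msAvg_real_def]
    have hcT : (0 : ℝ) < (Multiset.card T : ℝ) := by
      exact_mod_cast Multiset.card_pos.mpr hT
    have heq : ((Multiset.card T : ℝ) / (Multiset.card T')) *
        ((Multiset.card T : ℝ)⁻¹ * (T.map (fun x => (g x - m) ^ 2)).sum)
        = (Multiset.card T' : ℝ)⁻¹ * (T.map (fun x => (g x - m) ^ 2)).sum := by
      field_simp
    rw [heq]
    exact mul_le_mul_of_nonneg_left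
      (sum_map_le_of_le hsub _ (fun x _ => sq_nonneg _)) (by positivity)
  have hvar : msVar T g = msAvg T (fun x => (g x - m) ^ 2) := rfl
  rw [h1, hvar]
  exact le_trans h2 h3

lemma abs_sub_le'' (a b : ℝ) : |a - b| ≤ |a| + |b| := by
  rw [sub_eq_add_neg]
  exact (abs_add_le _ _).trans (by rw [abs_neg])

lemma msAvg_zero (T : Multiset X) : msAvg T (fun _ => (0 : ℝ)) = 0 := by
  simp [msAvg_real_def]

lemma ip_comm (M N : Matrix (Fin d) (Fin d) ℝ) : ip M N = ip N M := by
  simp [ip, mul_comm]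

lemma ip_smul_right (c : ℝ) (M B : Matrix (Fin d) (Fin d) ℝ) :
    ip B (c • M) = c * ip B M := by
  rw [ip_comm, ip_smul_left, ip_comm]

lemma frobNorm_smul (c : ℝ) (M : Matrix (Fin d) (Fin d) ℝ) :
    frobNorm (c • M) = |c| * frobNorm M := by
  unfold frobNorm
  rw [show ∑ i, ∑ j, ((c • M) i j) ^ 2 = c ^ 2 * ∑ i, ∑ j, (M i j) ^ 2 by
    simp [Matrix.smul_apply, smul_eq_mul, mul_pow, Finset.mul_sum]]
  rw [Real.sqrt_mul (sq_nonneg c), Real.sqrt_sq_eq_abs]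

lemma msAvg_dot (T : Multiset X) (v : Fin d → ℝ) (f : X → (Fin d → ℝ)) :
    v ⬝ᵥ msAvg T f = msAvg T (fun x => v ⬝ᵥ f x) := by
  simp only [dotProduct]
  rw [msAvg_finset_sum T Finset.univ (fun i x => v i * f x i)]
  apply Finset.sum_congr rfl
  intro i _
  rw [msAvg_const_mul, msAvg_vec_apply]

lemma msAvg_le_ratio (T T' : Multiset X) (hsub : T' ≤ T) (hT' : T' ≠ 0) (h : X → ℝ)
    (hh : ∀ x ∈ T, 0 ≤ h x) :
    msAvg T' h ≤ ((Multiset.card T : ℝ) / (Multiset.card T')) * msAvg T h := by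
  have hcT' : (0 : ℝ) < (Multiset.card T' : ℝ) := by
    exact_mod_cast Multiset.card_pos.mpr hT'
  have hT : T ≠ 0 := by
    rintro rfl
    exact hT' (Multiset.le_zero.mp hsub)
  have hcT : (0 : ℝ) < (Multiset.card T : ℝ) := by
    exact_mod_cast Multiset.card_pos.mpr hT
  rw [msAvg_real_def, msAvg_real_def]
  have heq : ((Multiset.card T : ℝ) / (Multiset.card T')) *
      ((Multiset.card T : ℝ)⁻¹ * (T.map h).sum)
      = (Multiset.card T' : ℝ)⁻¹ * (T.map h).sum := by
    field_simp
  rw [heq]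
  exact mul_le_mul_of_nonneg_left (sum_map_le_of_le hsub _ hh) (by positivity)

end Aux

set_option maxHeartbeats 1000000 in
/-- certificate lemma, first part. For any sub-multiset `T'` of `T` with
`|T'| ≥ (α/2)|T|`, the empirical covariance of `P x` over `T'` is close to the empirical
second moment matrix of `P x` over `T`, in terms of
`V* = sup_{A symm, ‖A‖_F ≤ 1} Var_{x∼T}[xᵀ P A P x]`. -/
theorem statement8 (d : ℕ) (α : ℝ) (hα : α ∈ Set.Ioc (0 : ℝ) 1)
    (T : Multiset (Fin d → ℝ)) (hT : T ≠ 0)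
    (P : Matrix (Fin d) (Fin d) ℝ) (hP : P.IsSymm)
    (T' : Multiset (Fin d → ℝ)) (hsub : T' ≤ T)
    (hcard : (α / 2) * (Multiset.card T : ℝ) ≤ (Multiset.card T' : ℝ)) :
    frobNorm (msCov T' (fun x => P.mulVec x) -
        msAvg T (fun x => Matrix.vecMulVec (P.mulVec x) (P.mulVec x))) ^ 2 ≤
      (4 / α) * sSup {v : ℝ | ∃ A : Matrix (Fin d) (Fin d) ℝ,
          A.IsSymm ∧ frobNorm A ≤ 1 ∧ v = msVar T (fun x => x ⬝ᵥ (P * A * P).mulVec x)} +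
        (8 / α ^ 2) *
          opNorm (msAvg T (fun x => Matrix.vecMulVec (P.mulVec x) (P.mulVec x))) ^ 2 := by
  obtain ⟨hα0, hα1⟩ := hα
  classical
  have hcT : (0 : ℝ) < (Multiset.card T : ℝ) := by
    exact_mod_cast Multiset.card_pos.mpr hT
  have hcT' : (0 : ℝ) < (Multiset.card T' : ℝ) :=
    lt_of_lt_of_le (by positivity) hcard
  have hT' : T' ≠ 0 := by
    intro h
    rw [h] at hcT'
    simp at hcT'
  have hratio : ((Multiset.card T : ℝ) / (Multiset.card T')) ≤ 2 / α := by
    rw [div_le_div_iff₀ hcT' hα0]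
    nlinarith [hcard]
  have hratio0 : (0:ℝ) ≤ ((Multiset.card T : ℝ) / (Multiset.card T')) := by positivity
  have h2α : (0:ℝ) ≤ 2 / α := by positivity
  set M := msAvg T (fun x => Matrix.vecMulVec (P.mulVec x) (P.mulVec x)) with hM
  set μ := msAvg T' (fun x => P.mulVec x) with hμ
  set D := msCov T' (fun x => P.mulVec x) - M with hD
  set S := {v : ℝ | ∃ A : Matrix (Fin d) (Fin d) ℝ,
      A.IsSymm ∧ frobNorm A ≤ 1 ∧ v = msVar T (fun x => x ⬝ᵥ (P * A * P).mulVec x)} with hS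
  have hgrep : ∀ (B : Matrix (Fin d) (Fin d) ℝ) (x : Fin d → ℝ),
      x ⬝ᵥ (P * B * P).mulVec x
        = ip (Matrix.vecMulVec (P.mulVec x) (P.mulVec x)) B := by
    intro B x
    rw [quad_form_eq P B hP x, ← ip_vecMulVec]
  have hgb : ∀ (B : Matrix (Fin d) (Fin d) ℝ), frobNorm B ≤ 1 → ∀ x : Fin d → ℝ,
      |x ⬝ᵥ (P * B * P).mulVec x| ≤ ∑ i, (P.mulVec x i) ^ 2 := by
    intro B hB x
    rw [hgrep B x]
    refine le_trans (abs_ip_le _ _) ?_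
    rw [frobNorm_vecMulVec]
    have h1 : (0:ℝ) ≤ ∑ i, (P.mulVec x i) ^ 2 := by positivity
    nlinarith
  -- S is bounded above
  have hbdd : BddAbove S := by
    set K := msAvg T (fun x => ∑ i, (P.mulVec x i) ^ 2) with hK
    have hK0 : 0 ≤ K := msAvg_nonneg _ _ (fun x _ => by positivity)
    refine ⟨msAvg T (fun x => ((∑ i, (P.mulVec x i) ^ 2) + K) ^ 2), ?_⟩
    rintro v ⟨B, hBs, hBf, rfl⟩
    have hmb : |msAvg T (fun x => x ⬝ᵥ (P * B * P).mulVec x)| ≤ K := by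
      refine le_trans (msAvg_abs_le _ _) ?_
      rw [hK]
      exact msAvg_mono _ _ _ (fun x _ => hgb B hBf x)
    unfold msVar
    refine msAvg_mono _ _ _ (fun x hx => ?_)
    have h1 := hgb B hBf x
    have habs : |x ⬝ᵥ (P * B * P).mulVec x
        - msAvg T (fun x => x ⬝ᵥ (P * B * P).mulVec x)|
        ≤ (∑ i, (P.mulVec x i) ^ 2) + K :=
      le_trans (abs_sub_le'' _ _) (add_le_add h1 hmb)
    calc (x ⬝ᵥ (P * B * P).mulVec x
          - msAvg T (fun x => x ⬝ᵥ (P * B * P).mulVec x)) ^ 2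
        = |x ⬝ᵥ (P * B * P).mulVec x
          - msAvg T (fun x => x ⬝ᵥ (P * B * P).mulVec x)| ^ 2 := (sq_abs _).symm
      _ ≤ ((∑ i, (P.mulVec x i) ^ 2) + K) ^ 2 :=
          pow_le_pow_left₀ (abs_nonneg _) habs 2
  -- 0 ∈ S
  have h0S : (0 : ℝ) ∈ S := by
    rw [hS]
    refine ⟨0, ?_, ?_, ?_⟩
    · simp [Matrix.IsSymm]
    · simp [frobNorm]
    · simp only [mul_zero, zero_mul, Matrix.zero_mulVec, dotProduct_zero]
      unfold msVar
      rw [msAvg_zero]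
      rw [show (fun x : Fin d → ℝ => ((0:ℝ) - 0) ^ 2) = (fun _ : Fin d → ℝ => (0:ℝ)) from
        funext fun x => by ring]
      rw [msAvg_zero]
  have hV0 : 0 ≤ sSup S := le_csSup hbdd h0S
  have hOp : 0 ≤ opNorm M := norm_nonneg _
  -- bound on the squared norm of μ
  have hsμ0 : (0:ℝ) ≤ ∑ i, (μ i) ^ 2 := by positivity
  have hsμ : (∑ i, (μ i) ^ 2) ≤ (2 / α) * opNorm M := by
    have hdot : μ ⬝ᵥ μ = ∑ i, (μ i) ^ 2 := by
      simp [dotProduct, pow_two]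
    have h1 : (∑ i, (μ i) ^ 2) = msAvg T' (fun x => μ ⬝ᵥ P.mulVec x) := by
      rw [← hdot]
      exact msAvg_dot T' μ (fun x => P.mulVec x)
    have h2 : (msAvg T' (fun x => μ ⬝ᵥ P.mulVec x)) ^ 2
        ≤ msAvg T' (fun x => (μ ⬝ᵥ P.mulVec x) ^ 2) := jensen_sq T' hT' _
    have h3 : msAvg T' (fun x => (μ ⬝ᵥ P.mulVec x) ^ 2)
        ≤ ((Multiset.card T : ℝ) / (Multiset.card T'))
          * msAvg T (fun x => (μ ⬝ᵥ P.mulVec x) ^ 2) :=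
      msAvg_le_ratio T T' hsub hT' _ (fun x _ => sq_nonneg _)
    have h4 : msAvg T (fun x => (μ ⬝ᵥ P.mulVec x) ^ 2) = μ ⬝ᵥ M.mulVec μ := by
      rw [← ip_vecMulVec μ M, hM, ip_msAvg_right]
      congr 1
      funext x
      exact (ip_vecMulVec_vecMulVec μ (P.mulVec x)).symm
    have h5 : μ ⬝ᵥ M.mulVec μ ≤ opNorm M * ∑ i, (μ i) ^ 2 := quad_le_opNorm M μ
    have hTnn : 0 ≤ msAvg T (fun x => (μ ⬝ᵥ P.mulVec x) ^ 2) :=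
      msAvg_nonneg _ _ (fun x _ => sq_nonneg _)
    have h6 : (∑ i, (μ i) ^ 2) ^ 2 ≤ ((2 / α) * opNorm M) * ∑ i, (μ i) ^ 2 := by
      nlinarith [h2, h3, h4, h5, hratio, hratio0, hOp, hsμ0, hTnn, h1, h2α]
    rcases eq_or_lt_of_le hsμ0 with h | h
    · rw [← h]
      exact mul_nonneg h2α hOp
    · refine le_of_mul_le_mul_right ?_ h
      nlinarith [h6]
  -- main case split on frobNorm D
  have hOpnn : 0 ≤ (2 / α) * opNorm M := mul_nonneg h2α hOp
  have key : frobNorm D ≤ Real.sqrt ((2 / α) * sSup S) + (2 / α) * opNorm M := by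
    rcases eq_or_ne (frobNorm D) 0 with hD0 | hD0
    · rw [hD0]
      exact add_nonneg (Real.sqrt_nonneg _) hOpnn
    have hDpos : 0 < frobNorm D := lt_of_le_of_ne (frobNorm_nonneg D) (Ne.symm hD0)
    -- D is symmetric
    have hDsymm : D.IsSymm := by
      show Dᵀ = D
      ext i j
      rw [Matrix.transpose_apply, hD, hM]
      simp only [msCov, Matrix.sub_apply, Matrix.vecMulVec_apply]
      simp only [msAvg_mat_apply, Matrix.vecMulVec_apply]
      rw [show (fun x : Fin d → ℝ => P.mulVec x j * P.mulVec x i)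
          = (fun x : Fin d → ℝ => P.mulVec x i * P.mulVec x j) from
        funext fun x => mul_comm _ _]
      ring
    set A := (frobNorm D)⁻¹ • D with hA
    have hAsymm : A.IsSymm := by
      show Aᵀ = A
      rw [hA, Matrix.transpose_smul, hDsymm.eq]
    have hfrobA : frobNorm A = 1 := by
      rw [hA, frobNorm_smul, abs_of_nonneg (inv_nonneg.mpr (frobNorm_nonneg D)),
        inv_mul_cancel₀ hD0]
    have hipDA : ip D A = frobNorm D := by
      rw [hA, ip_smul_right, ip_self, sq, ← mul_assoc, inv_mul_cancel₀ hD0, one_mul]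
    have hexp : ip D A = (msAvg T' (fun x => x ⬝ᵥ (P * A * P).mulVec x)
        - msAvg T (fun x => x ⬝ᵥ (P * A * P).mulVec x))
        - ip (Matrix.vecMulVec μ μ) A := by
      rw [hD, ip_sub_left]
      rw [show msCov T' (fun x => P.mulVec x)
          = msAvg T' (fun x => Matrix.vecMulVec (P.mulVec x) (P.mulVec x))
            - Matrix.vecMulVec μ μ from rfl]
      rw [ip_sub_left, hM, ip_msAvg_left, ip_msAvg_left]
      have hptw : ∀ x : Fin d → ℝ,
          ip (Matrix.vecMulVec (P.mulVec x) (P.mulVec x)) A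
            = x ⬝ᵥ (P * A * P).mulVec x := fun x => (hgrep A x).symm
      simp only [hptw]
      ring
    have hvarmem : msVar T (fun x => x ⬝ᵥ (P * A * P).mulVec x) ∈ S := by
      rw [hS]
      exact ⟨A, hAsymm, le_of_eq hfrobA, rfl⟩
    have hdev : (msAvg T' (fun x => x ⬝ᵥ (P * A * P).mulVec x)
        - msAvg T (fun x => x ⬝ᵥ (P * A * P).mulVec x)) ^ 2 ≤ (2 / α) * sSup S := by
      have h1 := deviation_sq_le T T' hsub hT' (fun x => x ⬝ᵥ (P * A * P).mulVec x)
      have h2 : msVar T (fun x => x ⬝ᵥ (P * A * P).mulVec x) ≤ sSup S :=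
        le_csSup hbdd hvarmem
      have h3 : 0 ≤ msVar T (fun x => x ⬝ᵥ (P * A * P).mulVec x) :=
        msAvg_nonneg _ _ (fun x _ => sq_nonneg _)
      nlinarith [hratio, hratio0, h2α]
    have hz : |msAvg T' (fun x => x ⬝ᵥ (P * A * P).mulVec x)
        - msAvg T (fun x => x ⬝ᵥ (P * A * P).mulVec x)| ≤ Real.sqrt ((2 / α) * sSup S) := by
      rw [← Real.sqrt_sq_eq_abs]
      exact Real.sqrt_le_sqrt hdev
    have hμterm : |ip (Matrix.vecMulVec μ μ) A| ≤ ∑ i, (μ i) ^ 2 := by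
      refine le_trans (abs_ip_le _ _) ?_
      rw [frobNorm_vecMulVec, hfrobA, mul_one]
    have h1 := (abs_le.mp hz).2
    have h2 := (abs_le.mp hμterm).1
    rw [← hipDA, hexp]
    linarith [hsμ]
  -- conclude by squaring
  have hsq : Real.sqrt ((2 / α) * sSup S) ^ 2 = (2 / α) * sSup S :=
    Real.sq_sqrt (mul_nonneg h2α hV0)
  set e := 2 / α with he
  rw [show (4:ℝ) / α = 2 * e from by rw [he]; ring,
      show (8:ℝ) / α ^ 2 = 2 * (e * e) from by rw [he]; field_simp; ring]
  nlinarith [key, frobNorm_nonneg D, hsq, hOp, hV0, h2α,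
    mul_self_le_mul_self (frobNorm_nonneg D) key,
    sq_nonneg (Real.sqrt (e * sSup S) - e * opNorm M)]


end ListDecCov
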